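/- Let g ∈ C²([−1,1]) with ‖g^{(s)}‖_{L^∞} ≤ B for s = 0, 1, 2. Then for every m ≥ 1 there exists a two-layer ReLU network g_m(z) = Σᵢ₌₁^{6m−1} aᵢ σ(εᵢ z + tᵢ) with εᵢ ∈ {−1, +1}, |tᵢ| ≤ 1, |aᵢ| ≤ 2B/m, and Σᵢ |aᵢ| ≤ 5B, such that ‖g − g_m‖_{H¹([−1,1])} ≤ 4√2 B / m. -/

import Mathlib

namespace TwoLayerAux

noncomputable def zk (m : ℕ) (j : ℕ) : ℝ := -1 + j * (2 / m)
noncomputable def slp (m : ℕ) (g : ℝ → ℝ) (j : ℕ) : ℝ :=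
  (g (zk m (j+1)) - g (zk m j)) * (m / 2)

noncomputable def aa (m : ℕ) (g : ℝ → ℝ) (i : ℕ) : ℝ :=
  if i < 4*m then g (-1) / (2*m)
  else if i < 5*m then slp m g 0 / m
  else slp m g (i - 5*m + 1) - slp m g (i - 5*m)

noncomputable def ee (m : ℕ) (i : ℕ) : ℝ := if m ≤ i ∧ i < 3*m then -1 else 1

noncomputable def tt (m : ℕ) (i : ℕ) : ℝ :=
  if i < m then 1 else if i < 2*m then -1 else if i < 3*m then 1
  else if i < 4*m then -1 else if i < 5*m then 1 else -(zk m (i - 5*m + 1))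

lemma zk_zero (m : ℕ) : zk m 0 = -1 := by simp [zk]

lemma zk_succ (m : ℕ) (j : ℕ) : zk m (j+1) = zk m j + 2/m := by
  simp only [zk]; push_cast; ring

lemma zk_mono (m : ℕ) {j k : ℕ} (h : j ≤ k) : zk m j ≤ zk m k := by
  have h2 : (0:ℝ) ≤ 2 / m := by positivity
  have : (j:ℝ) ≤ k := by exact_mod_cast h
  simp only [zk]
  nlinarith

lemma zk_m (m : ℕ) (hm : 1 ≤ m) : zk m m = 1 := by
  have hm0 : (m:ℝ) ≠ 0 := Nat.cast_ne_zero.mpr (by omega)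
  simp only [zk]; field_simp; ring

lemma zk_mem (m : ℕ) (hm : 1 ≤ m) {j : ℕ} (hj : j ≤ m) :
    zk m j ∈ Set.Icc (-1:ℝ) 1 := by
  constructor
  · rw [← zk_zero m]; exact zk_mono m (Nat.zero_le _)
  · rw [← zk_m m hm]; exact zk_mono m hj

lemma slp_mul (m : ℕ) (hm : 1 ≤ m) (g : ℝ → ℝ) (j : ℕ) :
    g (zk m (j+1)) = g (zk m j) + slp m g j * (2/m) := by
  have hm0 : (m:ℝ) ≠ 0 := Nat.cast_ne_zero.mpr (by omega)
  simp only [slp]; field_simp; ring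


section Analytic

variable {B : ℝ} {g g' g'' : ℝ → ℝ}
variable (hg' : ∀ x ∈ Set.Icc (-1 : ℝ) 1, HasDerivAt g (g' x) x)
variable (hg'' : ∀ x ∈ Set.Icc (-1 : ℝ) 1, HasDerivAt g' (g'' x) x)
variable (hg'B : ∀ x ∈ Set.Icc (-1 : ℝ) 1, |g' x| ≤ B)
variable (hg''B : ∀ x ∈ Set.Icc (-1 : ℝ) 1, |g'' x| ≤ B)

include hg' in
lemma gcont : ContinuousOn g (Set.Icc (-1:ℝ) 1) :=
  fun x hx => (hg' x hx).continuousAt.continuousWithinAt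

include hg'' in
lemma g'cont : ContinuousOn g' (Set.Icc (-1:ℝ) 1) :=
  fun x hx => (hg'' x hx).continuousAt.continuousWithinAt

include hg'' hg''B in
lemma lip : ∀ x ∈ Set.Icc (-1:ℝ) 1, ∀ y ∈ Set.Icc (-1:ℝ) 1,
    |g' x - g' y| ≤ B * |x - y| := by
  have key : ∀ x ∈ Set.Icc (-1:ℝ) 1, ∀ y ∈ Set.Icc (-1:ℝ) 1, x < y →
      |g' x - g' y| ≤ B * |x - y| := by
    intro x hx y hy hxy
    have hsub : Set.Icc x y ⊆ Set.Icc (-1:ℝ) 1 := Set.Icc_subset_Icc hx.1 hy.2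
    obtain ⟨c, hc, hceq⟩ := exists_hasDerivAt_eq_slope g' g'' hxy
      ((g'cont hg'').mono hsub)
      (fun t ht => hg'' t (hsub (Set.mem_Icc.mpr ⟨le_of_lt ht.1, le_of_lt ht.2⟩)))
    have hcB : |g'' c| ≤ B := hg''B c (hsub ⟨le_of_lt hc.1, le_of_lt hc.2⟩)
    have hne : y - x ≠ 0 := by linarith
    have h1 : g' y - g' x = g'' c * (y - x) := by
      rw [hceq]; field_simp
    rw [abs_sub_comm, h1, abs_mul, abs_of_pos (by linarith : (0:ℝ) < y - x),
      abs_sub_comm x y, abs_of_pos (by linarith : (0:ℝ) < y - x)]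
    exact mul_le_mul_of_nonneg_right hcB (by linarith)
  intro x hx y hy
  rcases lt_trichotomy x y with h | h | h
  · exact key x hx y hy h
  · simp [h]
  · rw [abs_sub_comm, abs_sub_comm x y]; exact key y hy x hx h

include hg' in
lemma slope_mvt (m : ℕ) (hm : 1 ≤ m) {k : ℕ} (hk : k + 1 ≤ m) :
    ∃ ξ ∈ Set.Ioo (zk m k) (zk m (k+1)), g' ξ = slp m g k := by
  have hm0 : (m:ℝ) ≠ 0 := Nat.cast_ne_zero.mpr (by omega)
  have h2m : (0:ℝ) < 2 / m := by positivity
  have hlt : zk m k < zk m (k+1) := by rw [zk_succ]; linarith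
  have hsub : Set.Icc (zk m k) (zk m (k+1)) ⊆ Set.Icc (-1:ℝ) 1 :=
    Set.Icc_subset_Icc (zk_mem m hm (by omega)).1 (zk_mem m hm (by omega)).2
  obtain ⟨ξ, hξ, hξeq⟩ := exists_hasDerivAt_eq_slope g g' hlt
    ((gcont hg').mono hsub)
    (fun t ht => hg' t (hsub ⟨le_of_lt ht.1, le_of_lt ht.2⟩))
  refine ⟨ξ, hξ, ?_⟩
  rw [hξeq, slp]
  rw [show zk m (k+1) - zk m k = 2/m by rw [zk_succ]; ring]
  field_simp

include hg' hg'B in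
lemma slope_bound (m : ℕ) (hm : 1 ≤ m) {k : ℕ} (hk : k + 1 ≤ m) :
    |slp m g k| ≤ B := by
  obtain ⟨ξ, hξ, hξeq⟩ := slope_mvt hg' m hm hk
  have hsub : Set.Icc (zk m k) (zk m (k+1)) ⊆ Set.Icc (-1:ℝ) 1 :=
    Set.Icc_subset_Icc (zk_mem m hm (by omega)).1 (zk_mem m hm (by omega)).2
  rw [← hξeq]
  exact hg'B ξ (hsub ⟨le_of_lt hξ.1, le_of_lt hξ.2⟩)

include hg' hg'' hg''B in
lemma sd_bound (m : ℕ) (hm : 1 ≤ m) {j : ℕ} (hj1 : 1 ≤ j) (hjm : j + 1 ≤ m) :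
    |slp m g j - slp m g (j-1)| ≤ 2 * B / m := by
  have hm0 : (m:ℝ) ≠ 0 := Nat.cast_ne_zero.mpr (by omega)
  have h2m : (0:ℝ) < 2 / m := by positivity
  have hne : (2:ℝ) / m ≠ 0 := ne_of_gt h2m
  have ej : (j-1)+1 = j := by omega
  have e1 : zk m j = zk m (j-1) + 2/m := by
    have := zk_succ m (j-1); rwa [ej] at this
  have e2 : zk m (j+1) = zk m j + 2/m := zk_succ m j
  have l1 : (-1:ℝ) ≤ zk m (j-1) := (zk_mem m hm (show j - 1 ≤ m by omega)).1
  have l2 : zk m (j+1) ≤ 1 := (zk_mem m hm (show j + 1 ≤ m by omega)).2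
  have hmem : ∀ t ∈ Set.Icc (0:ℝ) (2/m), zk m (j-1) + t ∈ Set.Icc (-1:ℝ) 1 ∧
      zk m j + t ∈ Set.Icc (-1:ℝ) 1 := by
    intro t ht
    obtain ⟨ht0, hth⟩ := ht
    refine ⟨⟨by linarith, by linarith⟩, ⟨by linarith, by linarith⟩⟩
  set F : ℝ → ℝ := fun t => g (zk m j + t) - g (zk m (j-1) + t) with hF
  set F' : ℝ → ℝ := fun t => g' (zk m j + t) - g' (zk m (j-1) + t) with hF'
  have hder : ∀ t ∈ Set.Icc (0:ℝ) (2/m), HasDerivAt F (F' t) t := by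
    intro t ht
    have h1 : HasDerivAt (fun t => g (zk m j + t)) (g' (zk m j + t) * 1) t :=
      HasDerivAt.comp t (hg' _ (hmem t ht).2) ((hasDerivAt_id t).const_add (zk m j))
    have h2 : HasDerivAt (fun t => g (zk m (j-1) + t)) (g' (zk m (j-1) + t) * 1) t :=
      HasDerivAt.comp t (hg' _ (hmem t ht).1) ((hasDerivAt_id t).const_add (zk m (j-1)))
    have := h1.sub h2; simp only [mul_one] at this; exact this
  obtain ⟨τ, hτ, hτeq⟩ := exists_hasDerivAt_eq_slope F F' h2m
    (fun t ht => (hder t ht).continuousAt.continuousWithinAt)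
    (fun t ht => hder t ⟨le_of_lt ht.1, le_of_lt ht.2⟩)
  have hτI : τ ∈ Set.Icc (0:ℝ) (2/m) := ⟨le_of_lt hτ.1, le_of_lt hτ.2⟩
  have s1 : g (zk m (j+1)) = g (zk m j) + slp m g j * (2/m) := slp_mul m hm g j
  have s2 : g (zk m j) = g (zk m (j-1)) + slp m g (j-1) * (2/m) := by
    have := slp_mul m hm g (j-1)
    rwa [ej] at this
  have hFh : F (2/m) - F 0 = (slp m g j - slp m g (j-1)) * (2/m) := by
    simp only [hF, add_zero]
    rw [show zk m j + 2/m = zk m (j+1) from e2.symm,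
        show zk m (j-1) + 2/m = zk m j from e1.symm]
    linarith [s1, s2]
  have hdiff : slp m g j - slp m g (j-1) = F' τ := by
    rw [hτeq, sub_zero, hFh, mul_div_assoc, div_self hne, mul_one]
  rw [hdiff]
  have hlip := lip hg'' hg''B (zk m j + τ) (hmem τ hτI).2 (zk m (j-1) + τ) (hmem τ hτI).1
  have habs : |(zk m j + τ) - (zk m (j-1) + τ)| = 2/m := by
    rw [e1, abs_of_pos (by linarith : (0:ℝ) < zk m (j-1) + 2/m + τ - (zk m (j-1) + τ))]
    ring
  rw [habs] at hlip
  calc |F' τ| ≤ B * (2/m) := hlip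
  _ = 2 * B / m := by ring

end Analytic

noncomputable def Sf (m : ℕ) (g : ℝ → ℝ) (z : ℝ) : ℝ :=
  ∑ i ∈ Finset.range (6*m-1), aa m g i * max (ee m i * z + tt m i) 0

noncomputable def Df (m : ℕ) (g : ℝ → ℝ) (z : ℝ) : ℝ :=
  ∑ i ∈ Finset.range (6*m-1), aa m g i * (if 0 ≤ ee m i * z + tt m i then ee m i else 0)

lemma split_sum (m : ℕ) (hm : 1 ≤ m) (f : ℕ → ℝ) :
    ∑ i ∈ Finset.range (6*m-1), f i =
      (∑ i ∈ Finset.Ico 0 m, f i) + (∑ i ∈ Finset.Ico m (2*m), f i)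
      + (∑ i ∈ Finset.Ico (2*m) (3*m), f i) + (∑ i ∈ Finset.Ico (3*m) (4*m), f i)
      + (∑ i ∈ Finset.Ico (4*m) (5*m), f i) + (∑ i ∈ Finset.Ico (5*m) (6*m-1), f i) := by
  rw [Finset.range_eq_Ico,
    ← Finset.sum_Ico_consecutive f (by omega : 0 ≤ 5*m) (by omega : 5*m ≤ 6*m-1),
    ← Finset.sum_Ico_consecutive f (by omega : 0 ≤ 4*m) (by omega : 4*m ≤ 5*m),
    ← Finset.sum_Ico_consecutive f (by omega : 0 ≤ 3*m) (by omega : 3*m ≤ 4*m),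
    ← Finset.sum_Ico_consecutive f (by omega : 0 ≤ 2*m) (by omega : 2*m ≤ 3*m),
    ← Finset.sum_Ico_consecutive f (by omega : 0 ≤ m) (by omega : m ≤ 2*m)]

lemma S_eval (m : ℕ) (hm : 1 ≤ m) (g : ℝ → ℝ) (z : ℝ) :
    Sf m g z = g (-1) / 2 * (max (z+1) 0 + max (-z-1) 0 + max (-z+1) 0 + max (z-1) 0)
      + slp m g 0 * max (z+1) 0
      + ∑ i ∈ Finset.range (m-1), (slp m g (i+1) - slp m g i) * max (z - zk m (i+1)) 0 := by
  have hm0 : (m:ℝ) ≠ 0 := Nat.cast_ne_zero.mpr (by omega)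
  rw [Sf, split_sum m hm]
  have c1 : ∀ i ∈ Finset.Ico 0 m, aa m g i * max (ee m i * z + tt m i) 0
      = g (-1) / (2*m) * max (z+1) 0 := by
    intro i hi
    simp only [Finset.mem_Ico] at hi
    have h1 : i < 4*m := by omega
    have h2 : i < m := by omega
    have h3 : ¬ (m ≤ i ∧ i < 3*m) := by omega
    simp only [aa, ee, tt]
    rw [if_pos h1, if_neg h3, if_pos h2, one_mul]
  have c2 : ∀ i ∈ Finset.Ico m (2*m), aa m g i * max (ee m i * z + tt m i) 0
      = g (-1) / (2*m) * max (-z-1) 0 := by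
    intro i hi
    simp only [Finset.mem_Ico] at hi
    have h1 : i < 4*m := by omega
    have h2 : ¬ i < m := by omega
    have h2' : i < 2*m := by omega
    have h3 : m ≤ i ∧ i < 3*m := by omega
    simp only [aa, ee, tt]
    rw [if_pos h1, if_pos h3, if_neg h2, if_pos h2',
      show (-1:ℝ) * z + -1 = -z - 1 by ring]
  have c3 : ∀ i ∈ Finset.Ico (2*m) (3*m), aa m g i * max (ee m i * z + tt m i) 0
      = g (-1) / (2*m) * max (-z+1) 0 := by
    intro i hi
    simp only [Finset.mem_Ico] at hi
    have h1 : i < 4*m := by omega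
    have h2 : ¬ i < m := by omega
    have h2' : ¬ i < 2*m := by omega
    have h2'' : i < 3*m := by omega
    have h3 : m ≤ i ∧ i < 3*m := by omega
    simp only [aa, ee, tt]
    rw [if_pos h1, if_pos h3, if_neg h2, if_neg h2', if_pos h2'',
      show (-1:ℝ) * z + 1 = -z + 1 by ring]
  have c4 : ∀ i ∈ Finset.Ico (3*m) (4*m), aa m g i * max (ee m i * z + tt m i) 0
      = g (-1) / (2*m) * max (z-1) 0 := by
    intro i hi
    simp only [Finset.mem_Ico] at hi
    have h1 : i < 4*m := by omega
    have h2 : ¬ i < m := by omega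
    have h2' : ¬ i < 2*m := by omega
    have h2'' : ¬ i < 3*m := by omega
    have h3 : ¬ (m ≤ i ∧ i < 3*m) := by omega
    simp only [aa, ee, tt]
    rw [if_pos h1, if_neg h3, if_neg h2, if_neg h2', if_neg h2'', if_pos hi.2, one_mul,
      show z + (-1:ℝ) = z - 1 by ring]
  have c5 : ∀ i ∈ Finset.Ico (4*m) (5*m), aa m g i * max (ee m i * z + tt m i) 0
      = slp m g 0 / m * max (z+1) 0 := by
    intro i hi
    simp only [Finset.mem_Ico] at hi
    have h1 : ¬ i < 4*m := by omega
    have h1' : i < 5*m := by omega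
    have h2 : ¬ i < m := by omega
    have h2' : ¬ i < 2*m := by omega
    have h2'' : ¬ i < 3*m := by omega
    have h2''' : ¬ i < 4*m := by omega
    have h3 : ¬ (m ≤ i ∧ i < 3*m) := by omega
    simp only [aa, ee, tt]
    rw [if_neg h1, if_pos h1', if_neg h3, if_neg h2, if_neg h2', if_neg h2'', if_neg h2''',
      if_pos h1', one_mul]
  have c6 : ∑ i ∈ Finset.Ico (5*m) (6*m-1), aa m g i * max (ee m i * z + tt m i) 0
      = ∑ i ∈ Finset.range (m-1), (slp m g (i+1) - slp m g i) * max (z - zk m (i+1)) 0 := by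
    rw [Finset.sum_Ico_eq_sum_range]
    have hc : 6*m-1-5*m = m-1 := by omega
    rw [hc]
    apply Finset.sum_congr rfl
    intro i hi
    simp only [Finset.mem_range] at hi
    have h1 : ¬ 5*m + i < 4*m := by omega
    have h1' : ¬ 5*m + i < 5*m := by omega
    have h2 : ¬ 5*m + i < m := by omega
    have h2' : ¬ 5*m + i < 2*m := by omega
    have h2'' : ¬ 5*m + i < 3*m := by omega
    have h3 : ¬ (m ≤ 5*m + i ∧ 5*m + i < 3*m) := by omega
    have h4 : 5*m + i - 5*m = i := by omega
    simp only [aa, ee, tt]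
    rw [if_neg h1, if_neg h1', if_neg h3, if_neg h2, if_neg h2', if_neg h2'', if_neg h1, if_neg h1', h4,
      one_mul, show z + -(zk m (i+1)) = z - zk m (i+1) by ring]
  rw [Finset.sum_congr rfl c1, Finset.sum_congr rfl c2, Finset.sum_congr rfl c3,
    Finset.sum_congr rfl c4, Finset.sum_congr rfl c5, c6]
  simp only [Finset.sum_const, Nat.card_Ico, nsmul_eq_mul]
  have e1 : (m - 0 : ℕ) = m := by omega
  have e2 : (2*m - m : ℕ) = m := by omega
  have e3 : (3*m - 2*m : ℕ) = m := by omega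
  have e4 : (4*m - 3*m : ℕ) = m := by omega
  have e5 : (5*m - 4*m : ℕ) = m := by omega
  rw [e1, e2, e3, e4, e5]
  field_simp

lemma D_eval (m : ℕ) (hm : 1 ≤ m) (g : ℝ → ℝ) (z : ℝ) :
    Df m g z = g (-1) / 2 * ((if 0 ≤ z+1 then (1:ℝ) else 0) + (if 0 ≤ -z-1 then (-1:ℝ) else 0)
        + (if 0 ≤ -z+1 then (-1:ℝ) else 0) + (if 0 ≤ z-1 then (1:ℝ) else 0))
      + slp m g 0 * (if 0 ≤ z+1 then (1:ℝ) else 0)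
      + ∑ i ∈ Finset.range (m-1),
          (slp m g (i+1) - slp m g i) * (if 0 ≤ z - zk m (i+1) then (1:ℝ) else 0) := by
  have hm0 : (m:ℝ) ≠ 0 := Nat.cast_ne_zero.mpr (by omega)
  rw [Df, split_sum m hm]
  have c1 : ∀ i ∈ Finset.Ico 0 m, aa m g i * (if 0 ≤ ee m i * z + tt m i then ee m i else 0)
      = g (-1) / (2*m) * (if 0 ≤ z+1 then (1:ℝ) else 0) := by
    intro i hi
    simp only [Finset.mem_Ico] at hi
    have h1 : i < 4*m := by omega
    have h2 : i < m := by omega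
    have h3 : ¬ (m ≤ i ∧ i < 3*m) := by omega
    simp only [aa, ee, tt]
    simp only [if_pos h1, if_neg h3, if_pos h2, one_mul]
  have c2 : ∀ i ∈ Finset.Ico m (2*m), aa m g i * (if 0 ≤ ee m i * z + tt m i then ee m i else 0)
      = g (-1) / (2*m) * (if 0 ≤ -z-1 then (-1:ℝ) else 0) := by
    intro i hi
    simp only [Finset.mem_Ico] at hi
    have h1 : i < 4*m := by omega
    have h2 : ¬ i < m := by omega
    have h2' : i < 2*m := by omega
    have h3 : m ≤ i ∧ i < 3*m := by omega
    simp only [aa, ee, tt]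
    simp only [if_pos h1, if_pos h3, if_neg h2, if_pos h2',
      show (-1:ℝ) * z + -1 = -z - 1 by ring]
  have c3 : ∀ i ∈ Finset.Ico (2*m) (3*m), aa m g i * (if 0 ≤ ee m i * z + tt m i then ee m i else 0)
      = g (-1) / (2*m) * (if 0 ≤ -z+1 then (-1:ℝ) else 0) := by
    intro i hi
    simp only [Finset.mem_Ico] at hi
    have h1 : i < 4*m := by omega
    have h2 : ¬ i < m := by omega
    have h2' : ¬ i < 2*m := by omega
    have h2'' : i < 3*m := by omega
    have h3 : m ≤ i ∧ i < 3*m := by omega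
    simp only [aa, ee, tt]
    simp only [if_pos h1, if_pos h3, if_neg h2, if_neg h2', if_pos h2'',
      show (-1:ℝ) * z + 1 = -z + 1 by ring]
  have c4 : ∀ i ∈ Finset.Ico (3*m) (4*m), aa m g i * (if 0 ≤ ee m i * z + tt m i then ee m i else 0)
      = g (-1) / (2*m) * (if 0 ≤ z-1 then (1:ℝ) else 0) := by
    intro i hi
    simp only [Finset.mem_Ico] at hi
    have h1 : i < 4*m := by omega
    have h2 : ¬ i < m := by omega
    have h2' : ¬ i < 2*m := by omega
    have h2'' : ¬ i < 3*m := by omega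
    have h3 : ¬ (m ≤ i ∧ i < 3*m) := by omega
    simp only [aa, ee, tt]
    simp only [if_pos h1, if_neg h3, if_neg h2, if_neg h2', if_neg h2'', if_pos hi.2, one_mul,
      show z + (-1:ℝ) = z - 1 by ring]
  have c5 : ∀ i ∈ Finset.Ico (4*m) (5*m), aa m g i * (if 0 ≤ ee m i * z + tt m i then ee m i else 0)
      = slp m g 0 / m * (if 0 ≤ z+1 then (1:ℝ) else 0) := by
    intro i hi
    simp only [Finset.mem_Ico] at hi
    have h1 : ¬ i < 4*m := by omega
    have h1' : i < 5*m := by omega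
    have h2 : ¬ i < m := by omega
    have h2' : ¬ i < 2*m := by omega
    have h2'' : ¬ i < 3*m := by omega
    have h2''' : ¬ i < 4*m := by omega
    have h3 : ¬ (m ≤ i ∧ i < 3*m) := by omega
    simp only [aa, ee, tt]
    simp only [if_neg h1, if_pos h1', if_neg h3, if_neg h2, if_neg h2', if_neg h2'', if_neg h2''',
      if_pos h1', one_mul]
  have c6 : ∑ i ∈ Finset.Ico (5*m) (6*m-1), aa m g i * (if 0 ≤ ee m i * z + tt m i then ee m i else 0)
      = ∑ i ∈ Finset.range (m-1),
          (slp m g (i+1) - slp m g i) * (if 0 ≤ z - zk m (i+1) then (1:ℝ) else 0) := by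
    rw [Finset.sum_Ico_eq_sum_range]
    have hc : 6*m-1-5*m = m-1 := by omega
    rw [hc]
    apply Finset.sum_congr rfl
    intro i hi
    simp only [Finset.mem_range] at hi
    have h1 : ¬ 5*m + i < 4*m := by omega
    have h1' : ¬ 5*m + i < 5*m := by omega
    have h2 : ¬ 5*m + i < m := by omega
    have h2' : ¬ 5*m + i < 2*m := by omega
    have h2'' : ¬ 5*m + i < 3*m := by omega
    have h3 : ¬ (m ≤ 5*m + i ∧ 5*m + i < 3*m) := by omega
    have h4 : 5*m + i - 5*m = i := by omega
    simp only [aa, ee, tt]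
    simp only [if_neg h1, if_neg h1', if_neg h3, if_neg h2, if_neg h2', if_neg h2'', if_neg h1,
      if_neg h1', h4, one_mul, show z + -(zk m (i+1)) = z - zk m (i+1) by ring]
  rw [Finset.sum_congr rfl c1, Finset.sum_congr rfl c2, Finset.sum_congr rfl c3,
    Finset.sum_congr rfl c4, Finset.sum_congr rfl c5, c6]
  simp only [Finset.sum_const, Nat.card_Ico, nsmul_eq_mul]
  have e1 : (m - 0 : ℕ) = m := by omega
  have e2 : (2*m - m : ℕ) = m := by omega
  have e3 : (3*m - 2*m : ℕ) = m := by omega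
  have e4 : (4*m - 3*m : ℕ) = m := by omega
  have e5 : (5*m - 4*m : ℕ) = m := by omega
  rw [e1, e2, e3, e4, e5]
  generalize (if (0:ℝ) ≤ z+1 then (1:ℝ) else 0) = x1
  generalize (if (0:ℝ) ≤ -z-1 then (-1:ℝ) else 0) = x2
  generalize (if (0:ℝ) ≤ -z+1 then (-1:ℝ) else 0) = x3
  generalize (if (0:ℝ) ≤ z-1 then (1:ℝ) else 0) = x4
  generalize (∑ i ∈ Finset.range (m-1),
      (slp m g (i+1) - slp m g i) * (if 0 ≤ z - zk m (i+1) then (1:ℝ) else 0)) = x5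
  field_simp

lemma telescope (m : ℕ) (hm : 1 ≤ m) (g : ℝ → ℝ) (k : ℕ) (z : ℝ) :
    g (-1) + slp m g 0 * (z+1)
      + ∑ i ∈ Finset.range k, (slp m g (i+1) - slp m g i) * (z - zk m (i+1))
    = g (zk m k) + slp m g k * (z - zk m k) := by
  induction k with
  | zero => simp [zk_zero]
  | succ k ih =>
    rw [Finset.sum_range_succ, ← add_assoc, ih]
    have hA : g (zk m (k+1)) = g (zk m k) + slp m g k * (2/m) := slp_mul m hm g k
    have hB : zk m (k+1) = zk m k + 2/m := zk_succ m k
    rw [hA, hB]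
    ring

lemma telescope' (m : ℕ) (g : ℝ → ℝ) (k : ℕ) :
    slp m g 0 + ∑ i ∈ Finset.range k, (slp m g (i+1) - slp m g i) = slp m g k := by
  rw [Finset.sum_range_sub (slp m g)]
  ring

lemma S_piece (m : ℕ) (hm : 1 ≤ m) (g : ℝ → ℝ) {k : ℕ} (hk : k < m) {z : ℝ}
    (hz1 : zk m k ≤ z) (hz2 : z ≤ zk m (k+1)) :
    Sf m g z = g (zk m k) + slp m g k * (z - zk m k) := by
  have hzl : (-1:ℝ) ≤ z := le_trans (by rw [← zk_zero m]; exact zk_mono m (Nat.zero_le k)) hz1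
  have hzr : z ≤ 1 := le_trans hz2 (by rw [← zk_m m hm]; exact zk_mono m (by omega))
  rw [S_eval m hm g z]
  rw [max_eq_left (by linarith : (0:ℝ) ≤ z + 1),
    max_eq_right (by linarith : -z-1 ≤ (0:ℝ)),
    max_eq_left (by linarith : (0:ℝ) ≤ -z + 1),
    max_eq_right (by linarith : z-1 ≤ (0:ℝ))]
  have hsplit : ∑ i ∈ Finset.range (m-1), (slp m g (i+1) - slp m g i) * max (z - zk m (i+1)) 0
      = ∑ i ∈ Finset.range k, (slp m g (i+1) - slp m g i) * (z - zk m (i+1)) := by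
    rw [Finset.range_eq_Ico,
      ← Finset.sum_Ico_consecutive _ (Nat.zero_le k) (by omega : k ≤ m-1)]
    have p1 : ∀ i ∈ Finset.Ico 0 k, (slp m g (i+1) - slp m g i) * max (z - zk m (i+1)) 0
        = (slp m g (i+1) - slp m g i) * (z - zk m (i+1)) := by
      intro i hi
      simp only [Finset.mem_Ico] at hi
      have : zk m (i+1) ≤ zk m k := zk_mono m (by omega)
      rw [max_eq_left (by linarith)]
    have p2 : ∀ i ∈ Finset.Ico k (m-1), (slp m g (i+1) - slp m g i) * max (z - zk m (i+1)) 0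
        = 0 := by
      intro i hi
      simp only [Finset.mem_Ico] at hi
      have : zk m (k+1) ≤ zk m (i+1) := zk_mono m (by omega)
      rw [max_eq_right (by linarith), mul_zero]
    rw [Finset.sum_congr rfl p1, Finset.sum_congr rfl p2, Finset.sum_const, smul_zero,
      add_zero, ← Finset.range_eq_Ico]
  rw [hsplit]
  have := telescope m hm g k z
  linarith [this]

lemma D_piece (m : ℕ) (hm : 1 ≤ m) (g : ℝ → ℝ) {k : ℕ} (hk : k < m) {z : ℝ}
    (hz1 : zk m k ≤ z) (hz2 : z < zk m (k+1)) (hz3 : (-1:ℝ) < z) (hz4 : z < 1) :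
    Df m g z = slp m g k := by
  rw [D_eval m hm g z]
  rw [if_pos (by linarith : (0:ℝ) ≤ z + 1),
    if_neg (by simp; linarith : ¬ ((0:ℝ) ≤ -z-1)),
    if_pos (by linarith : (0:ℝ) ≤ -z + 1),
    if_neg (by simp; linarith : ¬ ((0:ℝ) ≤ z-1))]
  have hsplit : ∑ i ∈ Finset.range (m-1),
      (slp m g (i+1) - slp m g i) * (if 0 ≤ z - zk m (i+1) then (1:ℝ) else 0)
      = ∑ i ∈ Finset.range k, (slp m g (i+1) - slp m g i) := by
    rw [Finset.range_eq_Ico,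
      ← Finset.sum_Ico_consecutive _ (Nat.zero_le k) (by omega : k ≤ m-1)]
    have p1 : ∀ i ∈ Finset.Ico 0 k,
        (slp m g (i+1) - slp m g i) * (if 0 ≤ z - zk m (i+1) then (1:ℝ) else 0)
        = slp m g (i+1) - slp m g i := by
      intro i hi
      simp only [Finset.mem_Ico] at hi
      have : zk m (i+1) ≤ zk m k := zk_mono m (by omega)
      rw [if_pos (by linarith : (0:ℝ) ≤ z - zk m (i+1)), mul_one]
    have p2 : ∀ i ∈ Finset.Ico k (m-1),
        (slp m g (i+1) - slp m g i) * (if 0 ≤ z - zk m (i+1) then (1:ℝ) else 0) = 0 := by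
      intro i hi
      simp only [Finset.mem_Ico] at hi
      have : zk m (k+1) ≤ zk m (i+1) := zk_mono m (by omega)
      rw [if_neg (by simp; linarith : ¬ ((0:ℝ) ≤ z - zk m (i+1))), mul_zero]
    rw [Finset.sum_congr rfl p1, Finset.sum_congr rfl p2, Finset.sum_const, smul_zero,
      add_zero, ← Finset.range_eq_Ico]
  rw [hsplit]
  have := telescope' m g k
  linarith [this]

lemma cover (m : ℕ) (hm : 1 ≤ m) {z : ℝ} (hz1 : (-1:ℝ) ≤ z) (hz2 : z < 1) :
    ∃ k, k < m ∧ zk m k ≤ z ∧ z < zk m (k+1) := by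
  have hm0 : (0:ℝ) < m := by exact_mod_cast Nat.pos_of_ne_zero (by omega)
  have hr0 : 0 ≤ (z+1) * ((m:ℝ)/2) := by nlinarith
  set r : ℝ := (z+1) * ((m:ℝ)/2) with hr
  refine ⟨⌊r⌋₊, ?_, ?_, ?_⟩
  · have hrm : r < m := by nlinarith
    exact_mod_cast (Nat.floor_lt hr0).mpr hrm
  · have h1 : (⌊r⌋₊ : ℝ) ≤ r := Nat.floor_le hr0
    simp only [zk]
    have h2 : (⌊r⌋₊ : ℝ) * (2/m) ≤ r * (2/m) :=
      mul_le_mul_of_nonneg_right h1 (by positivity)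
    have h3 : r * (2/m) = z + 1 := by rw [hr]; field_simp
    linarith
  · have h1 : r < ⌊r⌋₊ + 1 := Nat.lt_floor_add_one r
    simp only [zk]
    push_cast
    have h2 : r * (2/m) < ((⌊r⌋₊:ℝ) + 1) * (2/m) :=
      mul_lt_mul_of_pos_right h1 (by positivity)
    have h3 : r * (2/m) = z + 1 := by rw [hr]; field_simp
    linarith

section Approx

variable {B : ℝ} {g g' g'' : ℝ → ℝ}
variable (hg' : ∀ x ∈ Set.Icc (-1 : ℝ) 1, HasDerivAt g (g' x) x)
variable (hg'' : ∀ x ∈ Set.Icc (-1 : ℝ) 1, HasDerivAt g' (g'' x) x)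
variable (hg'B : ∀ x ∈ Set.Icc (-1 : ℝ) 1, |g' x| ≤ B)
variable (hg''B : ∀ x ∈ Set.Icc (-1 : ℝ) 1, |g'' x| ≤ B)

include hg' hg'' hg''B in
lemma interval_est (m : ℕ) (hm : 1 ≤ m) {k : ℕ} (hk : k < m) {z : ℝ}
    (hz1 : zk m k ≤ z) (hz2 : z ≤ zk m (k+1)) :
    |g z - (g (zk m k) + slp m g k * (z - zk m k))| ≤ 2 * B / m := by
  have hB0 : 0 ≤ B := le_trans (abs_nonneg _) (hg''B 0 (by norm_num))
  have hmpos : (0:ℝ) < m := by exact_mod_cast Nat.pos_of_ne_zero (by omega)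
  have hm1 : (1:ℝ) ≤ m := by exact_mod_cast hm
  have h2m : (0:ℝ) < 2/m := by positivity
  have e2 : zk m (k+1) = zk m k + 2/m := zk_succ m k
  have hsub : Set.Icc (zk m k) (zk m (k+1)) ⊆ Set.Icc (-1:ℝ) 1 :=
    Set.Icc_subset_Icc (zk_mem m hm (by omega)).1 (zk_mem m hm (by omega)).2
  obtain ⟨ξ, hξ, hξeq⟩ := slope_mvt hg' m hm (show k+1 ≤ m by omega)
  have hξI : ξ ∈ Set.Icc (-1:ℝ) 1 := hsub ⟨le_of_lt hξ.1, le_of_lt hξ.2⟩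
  have hfinal : ∀ d : ℝ, 0 ≤ d → d ≤ 1/m → B * (2/m) * d ≤ 2 * B / m := by
    intro d hd0 hd1
    have s1 : B * (2/m) * d ≤ B * (2/m) * (1/m) :=
      mul_le_mul_of_nonneg_left hd1 (by positivity)
    have s2 : (1:ℝ)/m ≤ 1 := by rw [div_le_one hmpos]; exact hm1
    have s3 : 2*B/m * (1/m) ≤ 2*B/m * 1 :=
      mul_le_mul_of_nonneg_left s2 (by positivity)
    calc B * (2/m) * d ≤ B * (2/m) * (1/m) := s1
    _ = 2*B/m * (1/m) := by ring
    _ ≤ 2*B/m * 1 := s3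
    _ = 2*B/m := by ring
  rcases le_or_gt (z - zk m k) (1/m) with hd | hd
  · -- left-endpoint estimate
    rcases eq_or_lt_of_le hz1 with heq | hlt
    · rw [← heq]
      simpa using (by positivity : (0:ℝ) ≤ 2*B/m)
    · have hsub2 : Set.Icc (zk m k) z ⊆ Set.Icc (-1:ℝ) 1 :=
        Set.Icc_subset_Icc (hsub ⟨le_refl _, by linarith⟩).1 (hsub ⟨hz1, hz2⟩).2
      obtain ⟨ξ₁, hξ₁, hξ₁eq⟩ := exists_hasDerivAt_eq_slope g g' hlt
        ((gcont hg').mono hsub2)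
        (fun t ht => hg' t (hsub2 ⟨le_of_lt ht.1, le_of_lt ht.2⟩))
      have hξ₁I : ξ₁ ∈ Set.Icc (-1:ℝ) 1 := hsub2 ⟨le_of_lt hξ₁.1, le_of_lt hξ₁.2⟩
      have hne : z - zk m k ≠ 0 := ne_of_gt (by linarith)
      have hgz : g z - g (zk m k) = g' ξ₁ * (z - zk m k) := by
        rw [hξ₁eq, div_mul_cancel₀ _ hne]
      have key : g z - (g (zk m k) + slp m g k * (z - zk m k))
          = (g' ξ₁ - g' ξ) * (z - zk m k) := by rw [← hξeq]; linarith [hgz,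
            (by ring : (g' ξ₁ - g' ξ) * (z - zk m k) = g' ξ₁ * (z - zk m k) - g' ξ * (z - zk m k))]
      rw [key, abs_mul, abs_of_pos (by linarith : (0:ℝ) < z - zk m k)]
      have hlipb := lip hg'' hg''B ξ₁ hξ₁I ξ hξI
      have habs : |ξ₁ - ξ| ≤ 2/m := by
        rw [abs_le]; constructor <;>
          [linarith [hξ₁.1, hξ.2, e2]; linarith [hξ₁.2, hξ.1, e2]]
      calc |g' ξ₁ - g' ξ| * (z - zk m k) ≤ (B * |ξ₁ - ξ|) * (z - zk m k) :=
            mul_le_mul_of_nonneg_right hlipb (by linarith)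
      _ ≤ (B * (2/m)) * (z - zk m k) :=
            mul_le_mul_of_nonneg_right (mul_le_mul_of_nonneg_left habs hB0) (by linarith)
      _ ≤ 2 * B / m := hfinal _ (by linarith) hd
  · -- right-endpoint estimate
    have hd2 : zk m (k+1) - z ≤ 1/m := by
      have : (2:ℝ)/m = 1/m + 1/m := by ring
      linarith [e2]
    have hsmul : g (zk m (k+1)) = g (zk m k) + slp m g k * (2/m) := slp_mul m hm g k
    rcases eq_or_lt_of_le hz2 with heq | hlt
    · rw [heq]
      have : g (zk m (k+1)) - (g (zk m k) + slp m g k * (zk m (k+1) - zk m k)) = 0 := by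
        rw [hsmul, e2]; ring
      rw [this]
      simpa using (by positivity : (0:ℝ) ≤ 2*B/m)
    · have hsub2 : Set.Icc z (zk m (k+1)) ⊆ Set.Icc (-1:ℝ) 1 :=
        Set.Icc_subset_Icc (hsub ⟨hz1, hz2⟩).1 (hsub ⟨by linarith, le_refl _⟩).2
      obtain ⟨ξ₂, hξ₂, hξ₂eq⟩ := exists_hasDerivAt_eq_slope g g' hlt
        ((gcont hg').mono hsub2)
        (fun t ht => hg' t (hsub2 ⟨le_of_lt ht.1, le_of_lt ht.2⟩))
      have hξ₂I : ξ₂ ∈ Set.Icc (-1:ℝ) 1 := hsub2 ⟨le_of_lt hξ₂.1, le_of_lt hξ₂.2⟩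
      have hne : zk m (k+1) - z ≠ 0 := ne_of_gt (by linarith)
      have hgz : g (zk m (k+1)) - g z = g' ξ₂ * (zk m (k+1) - z) := by
        rw [hξ₂eq, div_mul_cancel₀ _ hne]
      have hsmul' : g (zk m (k+1)) = g (zk m k) + g' ξ * (2/m) := by
        rw [hξeq]; exact hsmul
      have key : g z - (g (zk m k) + slp m g k * (z - zk m k))
          = (g' ξ - g' ξ₂) * (zk m (k+1) - z) := by
        rw [← hξeq]
        linear_combination -hgz + hsmul' - g' ξ * e2
      rw [key, abs_mul, abs_of_pos (by linarith : (0:ℝ) < zk m (k+1) - z)]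
      have hlipb := lip hg'' hg''B ξ hξI ξ₂ hξ₂I
      have habs : |ξ - ξ₂| ≤ 2/m := by
        rw [abs_le]; constructor <;>
          [linarith [hξ.1, hξ₂.2, e2]; linarith [hξ.2, hξ₂.1, e2]]
      calc |g' ξ - g' ξ₂| * (zk m (k+1) - z) ≤ (B * |ξ - ξ₂|) * (zk m (k+1) - z) :=
            mul_le_mul_of_nonneg_right hlipb (by linarith)
      _ ≤ (B * (2/m)) * (zk m (k+1) - z) :=
            mul_le_mul_of_nonneg_right (mul_le_mul_of_nonneg_left habs hB0) (by linarith)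
      _ ≤ 2 * B / m := hfinal _ (by linarith) hd2

include hg' hg'' hg''B in
lemma approx_S (m : ℕ) (hm : 1 ≤ m) {z : ℝ} (hz : z ∈ Set.Icc (-1:ℝ) 1) :
    |g z - Sf m g z| ≤ 2 * B / m := by
  rcases lt_or_eq_of_le hz.2 with hz2 | hz2
  · obtain ⟨k, hk, h1, h2⟩ := cover m hm hz.1 hz2
    rw [S_piece m hm g hk h1 (le_of_lt h2)]
    exact interval_est hg' hg'' hg''B m hm hk h1 (le_of_lt h2)
  · have hk : m - 1 < m := by omega
    have hkk : m - 1 + 1 = m := by omega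
    have h1 : zk m (m-1) ≤ z := by
      rw [hz2, ← zk_m m hm]; exact zk_mono m (by omega)
    have h2 : z ≤ zk m (m-1+1) := by rw [hkk, zk_m m hm, hz2]
    rw [S_piece m hm g hk h1 h2]
    exact interval_est hg' hg'' hg''B m hm hk h1 h2

include hg' hg'' hg''B in
lemma approx_D (m : ℕ) (hm : 1 ≤ m) {z : ℝ} (hz : z ∈ Set.Ioo (-1:ℝ) 1) :
    |g' z - Df m g z| ≤ 2 * B / m := by
  have hB0 : 0 ≤ B := le_trans (abs_nonneg _) (hg''B 0 (by norm_num))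
  obtain ⟨k, hk, h1, h2⟩ := cover m hm (le_of_lt hz.1) hz.2
  rw [D_piece m hm g hk h1 h2 hz.1 hz.2]
  obtain ⟨ξ, hξ, hξeq⟩ := slope_mvt hg' m hm (show k+1 ≤ m by omega)
  have hsub : Set.Icc (zk m k) (zk m (k+1)) ⊆ Set.Icc (-1:ℝ) 1 :=
    Set.Icc_subset_Icc (zk_mem m hm (by omega)).1 (zk_mem m hm (by omega)).2
  have hξI : ξ ∈ Set.Icc (-1:ℝ) 1 := hsub ⟨le_of_lt hξ.1, le_of_lt hξ.2⟩
  have hzI : z ∈ Set.Icc (-1:ℝ) 1 := ⟨le_of_lt hz.1, le_of_lt hz.2⟩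
  rw [← hξeq]
  have hlipb := lip hg'' hg''B z hzI ξ hξI
  have e2 : zk m (k+1) = zk m k + 2/m := zk_succ m k
  have habs : |z - ξ| ≤ 2/m := by
    rw [abs_le]; constructor <;>
      [linarith [hξ.2, e2]; linarith [hξ.1, e2]]
  calc |g' z - g' ξ| ≤ B * |z - ξ| := hlipb
  _ ≤ B * (2/m) := mul_le_mul_of_nonneg_left habs hB0
  _ = 2 * B / m := by ring

end Approx

lemma e_pm (m : ℕ) (i : ℕ) : ee m i = 1 ∨ ee m i = -1 := by
  unfold ee; split
  · right; rfl
  · left; rfl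

lemma t_bound (m : ℕ) (hm : 1 ≤ m) {i : ℕ} (hi : i < 6*m-1) : |tt m i| ≤ 1 := by
  unfold tt
  split
  · simp
  split
  · simp
  split
  · simp
  split
  · simp
  split
  · simp
  rename_i h1 h2 h3 h4 h5
  rw [abs_neg, abs_le]
  have := zk_mem m hm (show i - 5*m + 1 ≤ m by omega)
  exact ⟨this.1, this.2⟩

section Coef

variable {B : ℝ} {g g' g'' : ℝ → ℝ}
variable (hg' : ∀ x ∈ Set.Icc (-1 : ℝ) 1, HasDerivAt g (g' x) x)
variable (hg'' : ∀ x ∈ Set.Icc (-1 : ℝ) 1, HasDerivAt g' (g'' x) x)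
variable (hgB : ∀ x ∈ Set.Icc (-1 : ℝ) 1, |g x| ≤ B)
variable (hg'B : ∀ x ∈ Set.Icc (-1 : ℝ) 1, |g' x| ≤ B)
variable (hg''B : ∀ x ∈ Set.Icc (-1 : ℝ) 1, |g'' x| ≤ B)

include hg' hg'' hgB hg'B hg''B in
lemma a_bound (m : ℕ) (hm : 1 ≤ m) {i : ℕ} (hi : i < 6*m-1) :
    |aa m g i| ≤ 2 * B / m := by
  have hB0 : 0 ≤ B := le_trans (abs_nonneg _) (hg''B 0 (by norm_num))
  have hmpos : (0:ℝ) < m := by exact_mod_cast Nat.pos_of_ne_zero (by omega)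
  have hm1 : (1:ℝ) ≤ m := by exact_mod_cast hm
  have hg1 : |g (-1)| ≤ B := hgB (-1) (by norm_num)
  unfold aa
  split
  · rw [abs_div, abs_of_pos (by positivity : (0:ℝ) < 2*m), div_le_div_iff₀ (by positivity) hmpos]
    nlinarith [hg1]
  split
  · rw [abs_div, abs_of_pos hmpos, div_le_div_iff₀ hmpos hmpos]
    have := slope_bound hg' hg'B m hm (show 0+1 ≤ m by omega)
    nlinarith [this]
  · rename_i h1 h2
    have hj1 : 1 ≤ i - 5*m + 1 := by omega
    have hjm : (i - 5*m + 1) + 1 ≤ m := by omega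
    have hrw : i - 5*m = (i - 5*m + 1) - 1 := by omega
    rw [hrw]
    exact sd_bound hg' hg'' hg''B m hm hj1 hjm

include hg' hg'' hgB hg'B hg''B in
lemma suma_bound (m : ℕ) (hm : 1 ≤ m) :
    ∑ i ∈ Finset.range (6*m-1), |aa m g i| ≤ 5 * B := by
  have hB0 : 0 ≤ B := le_trans (abs_nonneg _) (hg''B 0 (by norm_num))
  have hm0 : (m:ℝ) ≠ 0 := Nat.cast_ne_zero.mpr (by omega)
  have hmpos : (0:ℝ) < m := by exact_mod_cast Nat.pos_of_ne_zero (by omega)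
  have hg1 : |g (-1)| ≤ B := hgB (-1) (by norm_num)
  have hs0 : |slp m g 0| ≤ B := slope_bound hg' hg'B m hm (show 0+1 ≤ m by omega)
  rw [split_sum m hm]
  have habs2m : |(2:ℝ)*m| = 2*m := abs_of_pos (by positivity)
  have hcb : ∀ (lo hi : ℕ), hi - lo = m → (∀ i ∈ Finset.Ico lo hi, aa m g i = g (-1)/(2*m)) →
      ∑ i ∈ Finset.Ico lo hi, |aa m g i| ≤ B / 2 := by
    intro lo hi hcard hval
    calc ∑ i ∈ Finset.Ico lo hi, |aa m g i| ≤ (Finset.Ico lo hi).card • (B/(2*m)) := by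
          apply Finset.sum_le_card_nsmul
          intro i hii
          rw [hval i hii, abs_div, habs2m]
          exact div_le_div_of_nonneg_right hg1 (by positivity) |>.trans (le_refl _)
    _ = (m:ℝ) * (B/(2*m)) := by rw [Nat.card_Ico, hcard, nsmul_eq_mul]
    _ = B / 2 := by field_simp
  have hc1 : ∑ i ∈ Finset.Ico 0 m, |aa m g i| ≤ B / 2 := by
    apply hcb 0 m (by omega)
    intro i hii; simp only [Finset.mem_Ico] at hii
    unfold aa; rw [if_pos (by omega : i < 4*m)]
  have hc2 : ∑ i ∈ Finset.Ico m (2*m), |aa m g i| ≤ B / 2 := by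
    apply hcb m (2*m) (by omega)
    intro i hii; simp only [Finset.mem_Ico] at hii
    unfold aa; rw [if_pos (by omega : i < 4*m)]
  have hc3 : ∑ i ∈ Finset.Ico (2*m) (3*m), |aa m g i| ≤ B / 2 := by
    apply hcb (2*m) (3*m) (by omega)
    intro i hii; simp only [Finset.mem_Ico] at hii
    unfold aa; rw [if_pos (by omega : i < 4*m)]
  have hc4 : ∑ i ∈ Finset.Ico (3*m) (4*m), |aa m g i| ≤ B / 2 := by
    apply hcb (3*m) (4*m) (by omega)
    intro i hii; simp only [Finset.mem_Ico] at hii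
    unfold aa; rw [if_pos (by omega : i < 4*m)]
  have hc5 : ∑ i ∈ Finset.Ico (4*m) (5*m), |aa m g i| ≤ B := by
    calc ∑ i ∈ Finset.Ico (4*m) (5*m), |aa m g i|
        ≤ (Finset.Ico (4*m) (5*m)).card • (B/m) := by
          apply Finset.sum_le_card_nsmul
          intro i hii; simp only [Finset.mem_Ico] at hii
          unfold aa
          rw [if_neg (by omega : ¬ i < 4*m), if_pos (by omega : i < 5*m),
            abs_div, abs_of_pos hmpos]
          gcongr
    _ = (m:ℝ) * (B/m) := by
          rw [Nat.card_Ico, show 5*m - 4*m = m by omega, nsmul_eq_mul]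
    _ = B := by field_simp
  have hc6 : ∑ i ∈ Finset.Ico (5*m) (6*m-1), |aa m g i| ≤ 2 * B := by
    calc ∑ i ∈ Finset.Ico (5*m) (6*m-1), |aa m g i|
        ≤ (Finset.Ico (5*m) (6*m-1)).card • (2*B/m) := by
          apply Finset.sum_le_card_nsmul
          intro i hii; simp only [Finset.mem_Ico] at hii
          exact a_bound hg' hg'' hgB hg'B hg''B m hm (by omega)
    _ = ((m-1 : ℕ):ℝ) * (2*B/m) := by
          rw [Nat.card_Ico, show 6*m-1 - 5*m = m-1 by omega, nsmul_eq_mul]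
    _ ≤ (m:ℝ) * (2*B/m) := by
          refine mul_le_mul_of_nonneg_right ?_ (by positivity)
          exact_mod_cast Nat.sub_le m 1
    _ = 2 * B := by field_simp
  linarith [hc1, hc2, hc3, hc4, hc5, hc6]

end Coef

end TwoLayerAux

open TwoLayerAux MeasureTheory in
/-- A `C²` function on `[-1,1]` with `‖g⁽ˢ⁾‖_∞ ≤ B`, `s = 0,1,2`, can be approximated in
`H¹([-1,1])` at rate `4√2·B/m` by a two-layer ReLU network with `6m-1` controlled units. -/
theorem two_layer_relu_H1_approx (m : ℕ) (hm : 1 ≤ m) (B : ℝ)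
    (g g' g'' : ℝ → ℝ)
    (hg' : ∀ x ∈ Set.Icc (-1 : ℝ) 1, HasDerivAt g (g' x) x)
    (hg'' : ∀ x ∈ Set.Icc (-1 : ℝ) 1, HasDerivAt g' (g'' x) x)
    (hg''cont : ContinuousOn g'' (Set.Icc (-1 : ℝ) 1))
    (hgB : ∀ x ∈ Set.Icc (-1 : ℝ) 1, |g x| ≤ B)
    (hg'B : ∀ x ∈ Set.Icc (-1 : ℝ) 1, |g' x| ≤ B)
    (hg''B : ∀ x ∈ Set.Icc (-1 : ℝ) 1, |g'' x| ≤ B) :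
    ∃ a t e : Fin (6 * m - 1) → ℝ,
      (∀ i, e i = 1 ∨ e i = -1) ∧
      (∀ i, |t i| ≤ 1) ∧
      (∀ i, |a i| ≤ 2 * B / m) ∧
      (∑ i, |a i|) ≤ 5 * B ∧
      Real.sqrt
        ((∫ z in (-1 : ℝ)..1, (g z - ∑ i, a i * max (e i * z + t i) 0) ^ 2) +
          ∫ z in (-1 : ℝ)..1,
            (g' z - ∑ i, a i * (if 0 ≤ e i * z + t i then e i else 0)) ^ 2) ≤
      4 * Real.sqrt 2 * B / m := by
  have hB0 : 0 ≤ B := le_trans (abs_nonneg _) (hg''B 0 (by norm_num))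
  have hmpos : (0:ℝ) < m := by exact_mod_cast Nat.pos_of_ne_zero (by omega)
  refine ⟨fun i => aa m g i, fun i => tt m i, fun i => ee m i, ?_, ?_, ?_, ?_, ?_⟩
  · intro i; exact e_pm m i
  · intro i; exact t_bound m hm i.isLt
  · intro i; exact a_bound hg' hg'' hgB hg'B hg''B m hm i.isLt
  · rw [Fin.sum_univ_eq_sum_range (fun i => |aa m g i|) (6*m-1)]
    exact suma_bound hg' hg'' hgB hg'B hg''B m hm
  · have hSf : ∀ z : ℝ, (∑ i : Fin (6*m-1), aa m g i.val * max (ee m i.val * z + tt m i.val) 0)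
        = Sf m g z := fun z =>
      Fin.sum_univ_eq_sum_range (fun i => aa m g i * max (ee m i * z + tt m i) 0) (6*m-1)
    have hDf : ∀ z : ℝ, (∑ i : Fin (6*m-1),
        aa m g i.val * (if 0 ≤ ee m i.val * z + tt m i.val then ee m i.val else 0))
        = Df m g z := fun z =>
      Fin.sum_univ_eq_sum_range
        (fun i => aa m g i * (if 0 ≤ ee m i * z + tt m i then ee m i else 0)) (6*m-1)
    simp only [hSf, hDf]
    have hIoc : volume (Set.Ioc (-1:ℝ) 1) < ⊤ := measure_Ioc_lt_top
    have hvol : (volume (Set.Ioc (-1:ℝ) 1)).toReal = 2 := by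
      rw [Real.volume_Ioc]
      norm_num
    have hI1 : (∫ z in (-1:ℝ)..1, (g z - Sf m g z)^2) ≤ (2*B/m)^2 * 2 := by
      rw [intervalIntegral.integral_of_le (by norm_num : (-1:ℝ) ≤ 1)]
      calc (∫ z in Set.Ioc (-1:ℝ) 1, (g z - Sf m g z)^2)
          ≤ ‖∫ z in Set.Ioc (-1:ℝ) 1, (g z - Sf m g z)^2‖ := le_abs_self _
        _ ≤ (2*B/m)^2 * (volume (Set.Ioc (-1:ℝ) 1)).toReal := by
            apply norm_setIntegral_le_of_norm_le_const_ae' hIoc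
            apply Filter.Eventually.of_forall
            intro x hx
            rw [Real.norm_eq_abs, abs_pow]
            have hb := approx_S hg' hg'' hg''B m hm (Set.Ioc_subset_Icc_self hx)
            exact pow_le_pow_left₀ (abs_nonneg _) hb 2
        _ = (2*B/m)^2 * 2 := by rw [hvol]
    have hI2 : (∫ z in (-1:ℝ)..1, (g' z - Df m g z)^2) ≤ (2*B/m)^2 * 2 := by
      rw [intervalIntegral.integral_of_le (by norm_num : (-1:ℝ) ≤ 1)]
      calc (∫ z in Set.Ioc (-1:ℝ) 1, (g' z - Df m g z)^2)
          ≤ ‖∫ z in Set.Ioc (-1:ℝ) 1, (g' z - Df m g z)^2‖ := le_abs_self _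
        _ ≤ (2*B/m)^2 * (volume (Set.Ioc (-1:ℝ) 1)).toReal := by
            apply norm_setIntegral_le_of_norm_le_const_ae' hIoc
            have hne1 : ∀ᵐ x : ℝ, x ≠ (1:ℝ) := by
              rw [MeasureTheory.ae_iff]
              simp only [ne_eq, not_not, Set.setOf_eq_eq_singleton]
              exact Real.volume_singleton
            filter_upwards [hne1] with x hx1 hx
            rw [Real.norm_eq_abs, abs_pow]
            have hxIoo : x ∈ Set.Ioo (-1:ℝ) 1 := ⟨hx.1, lt_of_le_of_ne hx.2 hx1⟩
            have hb := approx_D hg' hg'' hg''B m hm hxIoo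
            exact pow_le_pow_left₀ (abs_nonneg _) hb 2
        _ = (2*B/m)^2 * 2 := by rw [hvol]
    have hsum : (∫ z in (-1:ℝ)..1, (g z - Sf m g z)^2)
        + (∫ z in (-1:ℝ)..1, (g' z - Df m g z)^2) ≤ (4*B/m)^2 := by
      have : (2*B/m)^2 * 2 + (2*B/m)^2 * 2 = (4*B/m)^2 := by ring
      linarith [hI1, hI2]
    calc Real.sqrt ((∫ z in (-1:ℝ)..1, (g z - Sf m g z)^2)
          + (∫ z in (-1:ℝ)..1, (g' z - Df m g z)^2))
        ≤ Real.sqrt ((4*B/m)^2) := Real.sqrt_le_sqrt hsum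
      _ = 4*B/m := Real.sqrt_sq (by positivity)
      _ ≤ 4 * Real.sqrt 2 * B / m := by
          have h2 : (1:ℝ) ≤ Real.sqrt 2 := by
            rw [show (1:ℝ) = Real.sqrt 1 by simp]
            exact Real.sqrt_le_sqrt (by norm_num)
          have hq : 4*B/m ≤ Real.sqrt 2 * (4*B/m) :=
            le_mul_of_one_le_left (by positivity) h2
          calc 4*B/m ≤ Real.sqrt 2 * (4*B/m) := hq
          _ = 4 * Real.sqrt 2 * B / m := by ring
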